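/- arXiv:1001.3844 — 3 statements merged into one kernel-verified Lean document; each statement's English description precedes it below -/
import Mathlib

section
/- Let $x_n$ be a sequence of functions in the Skorokhod space $D[0,1]$ converging in the Skorokhod metric to a continuous function $x$. Let $\mu_n$ be a sequence of càdlàg, non-decreasing, non-negative functions on $[0,1]$ taking values in the natural numbers, and let $f : \mathbb{N} \to \mathbb{R}$ satisfy $f(n) \to \infty$. Suppose $\mu_n / f(n)$ converges in the Skorokhod metric to a function $\mu$ with $\mu(t) > c$ for all $t \in [0,1]$, for some constant $c > 0$. Then the composed functions $t \mapsto x_{\mu_n(t)}(t)$ converge to $x$ uniformly on $[0,1]$ as $n \to \infty$. -/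
open Filter Set

/-- A Skorokhod time change: a strictly increasing continuous bijection of `[0,1]`
onto itself fixing the endpoints. -/
def TimeChange (l : ℝ → ℝ) : Prop :=
  StrictMonoOn l (Icc 0 1) ∧ ContinuousOn l (Icc 0 1) ∧
    l 0 = 0 ∧ l 1 = 1 ∧ MapsTo l (Icc 0 1) (Icc 0 1) ∧ SurjOn l (Icc 0 1) (Icc 0 1)

/-- `x` and `y` are `ε`-close in the Skorokhod sense. -/
def SkorokhodClose (x y : ℝ → ℝ) (ε : ℝ) : Prop :=
  ∃ l : ℝ → ℝ, TimeChange l ∧ (∀ t ∈ Icc (0:ℝ) 1, |x t - y (l t)| ≤ ε) ∧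
    ∀ s ∈ Icc (0:ℝ) 1, ∀ t ∈ Icc (0:ℝ) 1, s ≠ t →
      |Real.log ((l t - l s) / (t - s))| ≤ ε

/-- Convergence in the Skorokhod metric on `D[0,1]`. -/
def SkorokhodTendsto (x : ℕ → ℝ → ℝ) (y : ℝ → ℝ) : Prop :=
  ∀ ε : ℝ, 0 < ε → ∃ N : ℕ, ∀ n ≥ N, SkorokhodClose (x n) y ε

/-- Càdlàg on `[0,1]`: right-continuous with finite left limits. -/
def Cadlag (x : ℝ → ℝ) : Prop :=
  (∀ t ∈ Ico (0:ℝ) 1, Tendsto x (nhdsWithin t (Ioi t)) (nhds (x t))) ∧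
    (∀ t ∈ Ioc (0:ℝ) 1, ∃ L : ℝ, Tendsto x (nhdsWithin t (Iio t)) (nhds L))

/-- Skorokhod convergence to a continuous limit gives uniform convergence on `[0,1]`. -/
lemma skorokhod_unif_aux (x : ℕ → ℝ → ℝ) (xlim : ℝ → ℝ)
    (hx : SkorokhodTendsto x xlim) (hcont : ContinuousOn xlim (Icc 0 1)) :
    ∀ ε : ℝ, 0 < ε → ∃ N : ℕ, ∀ n ≥ N, ∀ t ∈ Icc (0:ℝ) 1, |x n t - xlim t| ≤ ε := by
  intro ε hε
  have huc : UniformContinuousOn xlim (Icc 0 1) :=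
    isCompact_Icc.uniformContinuousOn_of_continuous hcont
  obtain ⟨δ, hδ, hδ'⟩ := Metric.uniformContinuousOn_iff.mp huc (ε / 2) (by linarith)
  set ε₁ := min (ε / 2) (Real.log (1 + δ) / 2) with hε₁def
  have hlogpos : 0 < Real.log (1 + δ) := Real.log_pos (by linarith)
  have hε₁pos : 0 < ε₁ := lt_min (by linarith) (by linarith)
  have hε₁le : ε₁ ≤ ε / 2 := min_le_left _ _
  have hexpδ : Real.exp ε₁ - 1 < δ := by
    have h1 : ε₁ < Real.log (1 + δ) :=
      lt_of_le_of_lt (min_le_right _ _) (by linarith)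
    have h2 : Real.exp ε₁ < Real.exp (Real.log (1 + δ)) := Real.exp_lt_exp.mpr h1
    rw [Real.exp_log (by linarith)] at h2
    linarith
  obtain ⟨N, hN⟩ := hx ε₁ hε₁pos
  refine ⟨N, fun n hn t ht => ?_⟩
  obtain ⟨l, ⟨hmono, hlc, hl0, hl1, hmaps, hsurj⟩, hclose, hlog⟩ := hN n hn
  have hlt_mem : l t ∈ Icc (0:ℝ) 1 := hmaps ht
  have hdist : |l t - t| < δ := by
    rcases eq_or_lt_of_le ht.1 with h0 | h0
    · rw [← h0, hl0]
      simpa using hδ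
    · have hlog0 := hlog 0 (left_mem_Icc.mpr zero_le_one) t ht (ne_of_lt h0)
      rw [hl0, sub_zero, sub_zero] at hlog0
      have hlpos : 0 < l t := by
        have := hmono (left_mem_Icc.mpr zero_le_one) ht h0
        rwa [hl0] at this
      have hratio : 0 < l t / t := div_pos hlpos h0
      obtain ⟨ha, hb⟩ := abs_le.mp hlog0
      have h1 : l t / t ≤ Real.exp ε₁ := by
        rw [← Real.exp_log hratio]; exact Real.exp_le_exp.mpr hb
      have h2 : Real.exp (-ε₁) ≤ l t / t := by
        rw [← Real.exp_log hratio]; exact Real.exp_le_exp.mpr (by linarith)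
      rw [div_le_iff₀ h0] at h1
      rw [le_div_iff₀ h0] at h2
      have he1 : ε₁ + 1 ≤ Real.exp ε₁ := Real.add_one_le_exp ε₁
      have he2 : -ε₁ + 1 ≤ Real.exp (-ε₁) := Real.add_one_le_exp (-ε₁)
      have hepos : 0 < Real.exp (-ε₁) := Real.exp_pos _
      rw [abs_lt]
      constructor
      · nlinarith [ht.2]
      · nlinarith [ht.2]
  have hx1 := hclose t ht
  have hx2 : dist (l t) t < δ := by rwa [Real.dist_eq]
  have hx3 := hδ' (l t) hlt_mem t ht hx2
  rw [Real.dist_eq] at hx3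
  calc |x n t - xlim t| ≤ |x n t - xlim (l t)| + |xlim (l t) - xlim t| := by
        have := abs_sub_le (x n t) (xlim (l t)) (xlim t); linarith [abs_sub_abs_le_abs_sub (x n t) (xlim t)]
    _ ≤ ε₁ + ε / 2 := by linarith
    _ ≤ ε := by linarith

theorem randomly_indexed_composition_uniform_convergence
    (x : ℕ → ℝ → ℝ) (xlim : ℝ → ℝ) (μ : ℕ → ℝ → ℕ) (f : ℕ → ℝ) (μlim : ℝ → ℝ) (c : ℝ)
    (hx_cadlag : ∀ n, Cadlag (x n))
    (hx : SkorokhodTendsto x xlim)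
    (hxlim_cont : ContinuousOn xlim (Icc 0 1))
    (hμ_cadlag : ∀ n, Cadlag (fun t => (μ n t : ℝ)))
    (hμ_mono : ∀ n, MonotoneOn (fun t => (μ n t : ℝ)) (Icc 0 1))
    (hf : Tendsto f atTop atTop)
    (hμ : SkorokhodTendsto (fun n t => (μ n t : ℝ) / f n) μlim)
    (hc : 0 < c) (hμlim : ∀ t ∈ Icc (0:ℝ) 1, c < μlim t) :
    TendstoUniformlyOn (fun n t => x (μ n t) t) xlim atTop (Icc 0 1) := by
  rw [Metric.tendstoUniformlyOn_iff]
  intro ε hε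
  obtain ⟨M, hM⟩ := skorokhod_unif_aux x xlim hx hxlim_cont (ε / 2) (by linarith)
  obtain ⟨N₁, hN₁⟩ := hμ (c / 2) (by linarith)
  obtain ⟨N₂, hN₂⟩ := eventually_atTop.mp (hf.eventually_ge_atTop (2 * ((M : ℝ) + 1) / c))
  rw [eventually_atTop]
  refine ⟨max N₁ N₂, fun n hn t ht => ?_⟩
  obtain ⟨l, ⟨hmono, hlc, hl0, hl1, hmaps, hsurj⟩, hclose, hlog⟩ :=
    hN₁ n (le_trans (le_max_left _ _) hn)
  have hcl := hclose t ht
  have hμl : c < μlim (l t) := hμlim _ (hmaps ht)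
  have hfn : 2 * ((M : ℝ) + 1) / c ≤ f n := hN₂ n (le_trans (le_max_right _ _) hn)
  have hfpos : 0 < f n := by
    have : (0:ℝ) < 2 * ((M : ℝ) + 1) / c := by positivity
    linarith
  have hdiv : c / 2 ≤ (μ n t : ℝ) / f n := by
    obtain ⟨ha, hb⟩ := abs_le.mp hcl
    simp only at ha
    linarith
  have hbound : (M : ℝ) ≤ (μ n t : ℝ) := by
    have h1 : c / 2 * f n ≤ (μ n t : ℝ) := (le_div_iff₀ hfpos).mp hdiv
    have h2 : c / 2 * (2 * ((M : ℝ) + 1) / c) ≤ c / 2 * f n :=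
      mul_le_mul_of_nonneg_left hfn (by linarith)
    have h3 : c / 2 * (2 * ((M : ℝ) + 1) / c) = (M : ℝ) + 1 := by
      field_simp
    linarith
  have hMn : M ≤ μ n t := by exact_mod_cast hbound
  have hfinal := hM (μ n t) hMn t ht
  rw [Real.dist_eq]
  calc |xlim t - x (μ n t) t| = |x (μ n t) t - xlim t| := abs_sub_comm _ _
    _ ≤ ε / 2 := hfinal
    _ < ε := by linarith
end

section
/- Let $Y_n$ be a sequence of real-valued random variables converging in distribution to a random variable $Y$, and let $\nu_n$ be a sequence of $\mathbb{N}$-valued random variables independent of the sequence $(Y_n)$ such that $\nu_n / f(n) \to \nu$ in distribution, where $f(n) \to \infty$ and $\nu > c$ almost surely for some constant $c > 0$. Then $Y_{\nu_n}$ converges in distribution to $Y$. -/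
open Filter MeasureTheory ProbabilityTheory

set_option maxHeartbeats 1600000

/-- Convergence in distribution of real random variables, tested against
bounded continuous functions. -/
def TendstoInDistribution {Ω : Type*} [MeasurableSpace Ω] (P : Measure Ω)
    (Z : ℕ → Ω → ℝ) (Zlim : Ω → ℝ) : Prop :=
  ∀ g : BoundedContinuousFunction ℝ ℝ,
    Tendsto (fun n => ∫ ω, g (Z n ω) ∂P) atTop (nhds (∫ ω, g (Zlim ω) ∂P))

theorem randomly_indexed_convergence_in_distribution
    {Ω : Type*} [MeasurableSpace Ω] (P : Measure Ω) [IsProbabilityMeasure P]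
    (Y : ℕ → Ω → ℝ) (Ylim : Ω → ℝ) (ν : ℕ → Ω → ℕ) (νlim : Ω → ℝ) (f : ℕ → ℝ) (c : ℝ)
    (hYmeas : ∀ n, Measurable (Y n)) (hYlim_meas : Measurable Ylim)
    (hνmeas : ∀ n, Measurable (ν n)) (hνlim_meas : Measurable νlim)
    (hY : TendstoInDistribution P Y Ylim)
    (hindep : IndepFun (fun ω (i : ℕ) => Y i ω) (fun ω (n : ℕ) => ν n ω) P)
    (hf : Tendsto f atTop atTop)
    (hν : TendstoInDistribution P (fun n ω => (ν n ω : ℝ) / f n) νlim)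
    (hc : 0 < c) (hνlim : ∀ᵐ ω ∂P, c < νlim ω) :
    TendstoInDistribution P (fun n ω => Y (ν n ω) ω) Ylim := by
  classical
  -- Step 0: the bounded continuous "bump" used to show ν n → ∞ in probability
  obtain ⟨hb, hb_eq⟩ : ∃ hb : BoundedContinuousFunction ℝ ℝ,
      ∀ x, hb x = max 0 (min 1 (2 - 2 * x / c)) := by
    refine ⟨BoundedContinuousFunction.mkOfBound
      ⟨fun x => max 0 (min 1 (2 - 2 * x / c)), by fun_prop⟩ 1 ?_, fun x => rfl⟩
    intro x y
    have h1 : ∀ z : ℝ, 0 ≤ max 0 (min 1 (2 - 2 * z / c)) := fun z => le_max_left _ _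
    have h2 : ∀ z : ℝ, max 0 (min 1 (2 - 2 * z / c)) ≤ 1 := fun z =>
      max_le zero_le_one (min_le_left _ _)
    rw [Real.dist_eq, abs_sub_le_iff]
    constructor <;> [have := h1 y; have := h1 x] <;> [have := h2 x; have := h2 y] <;>
      simp only [ContinuousMap.coe_mk] <;> linarith
  have hb_nonneg : ∀ x, 0 ≤ hb x := fun x => (hb_eq x) ▸ le_max_left _ _
  have hb_one : ∀ x : ℝ, x ≤ c / 2 → hb x = 1 := by
    intro x hx
    rw [hb_eq]
    have : (1 : ℝ) ≤ 2 - 2 * x / c := by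
      have : 2 * x / c ≤ 1 := by
        rw [div_le_one hc]; linarith
      linarith
    rw [min_eq_left this, max_eq_right zero_le_one]
  have hb_zero : ∀ x : ℝ, c < x → hb x = 0 := by
    intro x hx
    rw [hb_eq]
    have h2 : 2 - 2 * x / c < 0 := by
      rw [sub_neg, lt_div_iff₀ hc]; linarith
    rw [max_eq_left]
    exact (min_le_right _ _).trans h2.le
  -- measurability of composed processes
  have hXmeas : ∀ n, Measurable fun ω => Y (ν n ω) ω := by
    intro n
    have h1 : Measurable fun p : Ω × ℕ => Y p.2 p.1 :=
      measurable_from_prod_countable_left fun k => hYmeas k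
    exact h1.comp (measurable_id.prodMk (hνmeas n))
  have hRmeas : ∀ n, Measurable fun ω => (ν n ω : ℝ) / f n := fun n =>
    ((measurable_from_top.comp (hνmeas n)).div_const (f n))
  intro g
  set C : ℝ := ‖g‖ with hC
  have hC0 : 0 ≤ C := norm_nonneg g
  set a : ℝ := ∫ ω, g (Ylim ω) ∂P with ha
  set A : ℕ → ℝ := fun k => ∫ ω, g (Y k ω) ∂P with hA
  have hAbound : ∀ k, ‖A k‖ ≤ C := by
    intro k
    have := norm_integral_le_of_norm_le_const (μ := P) (f := fun ω => g (Y k ω)) (C := C)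
      (Eventually.of_forall fun ω => g.norm_coe_le_norm _)
    simpa using this
  have habound : ‖a‖ ≤ C := by
    have := norm_integral_le_of_norm_le_const (μ := P) (f := fun ω => g (Ylim ω)) (C := C)
      (Eventually.of_forall fun ω => g.norm_coe_le_norm _)
    simpa using this
  -- integrability of bounded measurable functions
  have hint : ∀ (b : BoundedContinuousFunction ℝ ℝ) (X : Ω → ℝ), Measurable X →
      Integrable (fun ω => b (X ω)) P := by
    intro b X hX
    exact (integrable_const ‖b‖).mono' (b.continuous.measurable.comp hX).aestronglyMeasurable
      (Eventually.of_forall fun ω => b.norm_coe_le_norm _)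
  -- the weights
  set w : ℕ → ℕ → ℝ := fun n k => (P {ω | ν n ω = k}).toReal with hw
  have hw_nonneg : ∀ n k, 0 ≤ w n k := fun n k => ENNReal.toReal_nonneg
  have hsmeas : ∀ n k, MeasurableSet {ω | ν n ω = k} := fun n k =>
    hνmeas n (measurableSet_singleton k)
  have hdisj : ∀ n, Pairwise (Function.onFun Disjoint fun k => {ω | ν n ω = k}) := by
    intro n i j hij
    simp only [Function.onFun, Set.disjoint_left, Set.mem_setOf_eq]
    intro ω hi hj
    exact hij (hi ▸ hj)
  have hunion : ∀ n, (⋃ k, {ω | ν n ω = k}) = Set.univ := by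
    intro n; ext ω; simp
  have hPsum : ∀ n, ∑' k, P {ω | ν n ω = k} = 1 := by
    intro n
    rw [← measure_iUnion (hdisj n) (hsmeas n), hunion n, measure_univ]
  have hw_summable : ∀ n, Summable (w n) := by
    intro n
    apply ENNReal.summable_toReal
    rw [hPsum n]; exact ENNReal.one_ne_top
  have hw_sum : ∀ n, ∑' k, w n k = 1 := by
    intro n
    rw [hw]
    rw [← ENNReal.tsum_toReal_eq fun k => measure_ne_top P _, hPsum n, ENNReal.toReal_one]
  -- key decomposition via independence
  have key : ∀ n, ∫ ω, g (Y (ν n ω) ω) ∂P = ∑' k, w n k * A k := by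
    intro n
    have hint1 : Integrable (fun ω => g (Y (ν n ω) ω)) P := hint g _ (hXmeas n)
    calc ∫ ω, g (Y (ν n ω) ω) ∂P
        = ∫ ω in ⋃ k, {ω | ν n ω = k}, g (Y (ν n ω) ω) ∂P := by
          rw [hunion n, Measure.restrict_univ]
      _ = ∑' k, ∫ ω in {ω | ν n ω = k}, g (Y (ν n ω) ω) ∂P :=
          integral_iUnion (hsmeas n) (hdisj n) hint1.integrableOn
      _ = ∑' k, w n k * A k := by
          apply tsum_congr
          intro k
          have heq : ∫ ω in {ω | ν n ω = k}, g (Y (ν n ω) ω) ∂P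
              = ∫ ω in {ω | ν n ω = k}, g (Y k ω) ∂P := by
            apply setIntegral_congr_fun (hsmeas n k)
            intro ω hω
            simp only [Set.mem_setOf_eq] at hω
            show g (Y (ν n ω) ω) = g (Y k ω)
            rw [hω]
          rw [heq]
          -- use independence
          set φ : ℕ → ℝ := fun m => if m = k then 1 else 0 with hφ
          have hφm : Measurable φ := measurable_from_top
          have hIkY : IndepFun (fun ω => φ (ν n ω)) (fun ω => g (Y k ω)) P := by
            have h1 : IndepFun (ν n) (Y k) P :=
              hindep.symm.comp (measurable_pi_apply n) (measurable_pi_apply k)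
            exact h1.comp hφm g.continuous.measurable
          have hmul := hIkY.integral_fun_mul_eq_mul_integral
            ((hφm.comp (hνmeas n)).aestronglyMeasurable)
            ((g.continuous.measurable.comp (hYmeas k)).aestronglyMeasurable)
          have e1 : ∫ ω, φ (ν n ω) ∂P = w n k := by
            have e0 : ∫ ω, φ (ν n ω) ∂P
                = ∫ ω, Set.indicator {ω | ν n ω = k} (fun _ => (1:ℝ)) ω ∂P := by
              congr 1
              ext ω
              by_cases h : ν n ω = k <;> simp [hφ, Set.indicator, h]
            rw [e0, integral_indicator_const (1:ℝ) (hsmeas n k)]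
            simp [hw, Measure.real]
          calc ∫ ω in {ω | ν n ω = k}, g (Y k ω) ∂P
              = ∫ ω, Set.indicator {ω | ν n ω = k} (fun ω => g (Y k ω)) ω ∂P :=
                (integral_indicator (hsmeas n k)).symm
            _ = ∫ ω, φ (ν n ω) * g (Y k ω) ∂P := by
                congr 1
                ext ω
                by_cases h : ν n ω = k <;> simp [hφ, Set.indicator, h]
            _ = (∫ ω, φ (ν n ω) ∂P) * ∫ ω, g (Y k ω) ∂P := hmul
            _ = w n k * A k := by rw [e1]
  -- ν n → ∞ in probability
  have hC_toZero : ∀ N : ℕ, Tendsto (fun n => (P {ω | ν n ω < N}).toReal) atTop (nhds 0) := by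
    intro N
    have hlim0 : ∫ ω, hb (νlim ω) ∂P = 0 := by
      apply integral_eq_zero_of_ae
      filter_upwards [hνlim] with ω hω
      exact hb_zero _ hω
    have hbig : ∀ᶠ n in atTop, (P {ω | ν n ω < N}).toReal ≤ ∫ ω, hb ((ν n ω : ℝ) / f n) ∂P := by
      filter_upwards [hf.eventually_ge_atTop (max 1 (2 * N / c))] with n hn
      have hfn1 : (1:ℝ) ≤ f n := le_trans (le_max_left _ _) hn
      have hfn0 : (0:ℝ) < f n := lt_of_lt_of_le one_pos hfn1
      have hpoint : ∀ ω, Set.indicator {ω | ν n ω < N} (fun _ => (1:ℝ)) ω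
          ≤ hb ((ν n ω : ℝ) / f n) := by
        intro ω
        by_cases h : ω ∈ {ω | ν n ω < N}
        · have h : ν n ω < N := h
          have hx : ((ν n ω : ℝ)) / f n ≤ c / 2 := by
            have h2 : (2 * N / c) ≤ f n := le_trans (le_max_right _ _) hn
            rw [div_le_div_iff₀ hfn0 (by norm_num : (0:ℝ) < 2)]
            have hν' : (ν n ω : ℝ) ≤ N := by exact_mod_cast h.le
            have : 2 * (N:ℝ) ≤ c * f n := by
              rw [div_le_iff₀ hc] at h2
              linarith [h2]
            nlinarith
          have h' : ω ∈ {ω | ν n ω < N} := h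
          rw [Set.indicator_of_mem h', hb_one _ hx]
        · rw [Set.indicator_of_notMem h]
          exact hb_nonneg _
      have hsN : MeasurableSet {ω | ν n ω < N} := hνmeas n measurableSet_Iio
      have hi1 : Integrable (Set.indicator {ω | ν n ω < N} fun _ => (1:ℝ)) P :=
        (integrable_const (1:ℝ)).indicator hsN
      have hi2 : Integrable (fun ω => hb ((ν n ω : ℝ) / f n)) P := hint hb _ (hRmeas n)
      calc (P {ω | ν n ω < N}).toReal
          = ∫ ω, Set.indicator {ω | ν n ω < N} (fun _ => (1:ℝ)) ω ∂P := by
            rw [integral_indicator_const (1:ℝ) hsN]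
            simp [Measure.real]
        _ ≤ ∫ ω, hb ((ν n ω : ℝ) / f n) ∂P := integral_mono hi1 hi2 hpoint
    have htends : Tendsto (fun n => ∫ ω, hb ((ν n ω : ℝ) / f n) ∂P) atTop (nhds 0) := by
      have := hν hb
      rwa [hlim0] at this
    exact squeeze_zero' (Eventually.of_forall fun n => ENNReal.toReal_nonneg) hbig htends
  -- finite initial sums of weights
  have hw_init : ∀ n N, ∑ i ∈ Finset.range N, w n i = (P {ω | ν n ω < N}).toReal := by
    intro n N
    have : P {ω | ν n ω < N} = ∑ i ∈ Finset.range N, P {ω | ν n ω = i} := by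
      rw [← measure_biUnion_finset]
      · congr 1
        ext ω
        simp only [Set.mem_setOf_eq, Set.mem_iUnion, Finset.mem_range, exists_prop]
        exact ⟨fun h => ⟨ν n ω, h, rfl⟩, fun ⟨i, hi, he⟩ => he ▸ hi⟩
      · intro i _ j _ hij
        exact hdisj n hij
      · intro i _
        exact hsmeas n i
    rw [this, ENNReal.toReal_sum fun i _ => measure_ne_top P _]
  -- assemble
  rw [Metric.tendsto_atTop]
  intro ε hε
  obtain ⟨N, hN⟩ := Metric.tendsto_atTop.mp (hY g) (ε / 2) (by positivity)
  obtain ⟨M, hM⟩ := Metric.tendsto_atTop.mp (hC_toZero N) (ε / (2 * (2 * C + 1)))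
    (by positivity)
  refine ⟨M, fun n hn => ?_⟩
  have hwA_summable : Summable fun k => w n k * A k := by
    apply Summable.of_norm_bounded ((hw_summable n).mul_left C)
    intro k
    rw [norm_mul, Real.norm_eq_abs (w n k), abs_of_nonneg (hw_nonneg n k), mul_comm]
    exact mul_le_mul_of_nonneg_right (hAbound k) (hw_nonneg n k)
  have hd_summable : Summable fun k => w n k * (A k - a) := by
    apply Summable.of_norm_bounded ((hw_summable n).mul_left (2 * C))
    intro k
    rw [norm_mul, Real.norm_eq_abs (w n k), abs_of_nonneg (hw_nonneg n k), mul_comm]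
    apply mul_le_mul_of_nonneg_right _ (hw_nonneg n k)
    calc ‖A k - a‖ ≤ ‖A k‖ + ‖a‖ := norm_sub_le _ _
      _ ≤ 2 * C := by linarith [hAbound k, habound]
  have hnorm_summable : Summable fun k => ‖w n k * (A k - a)‖ := hd_summable.norm
  have hsplit : ∑' k, w n k * (A k - a) = (∑' k, w n k * A k) - a := by
    have e1 : (fun k => w n k * (A k - a)) = fun k => w n k * A k - w n k * a := by
      ext k; ring
    rw [e1, Summable.tsum_sub hwA_summable ((hw_summable n).mul_right a), tsum_mul_right,
      hw_sum n, one_mul]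
  rw [key n, Real.dist_eq, ← hsplit]
  calc |∑' k, w n k * (A k - a)|
      ≤ ∑' k, ‖w n k * (A k - a)‖ := by
        simpa using norm_tsum_le_tsum_norm hnorm_summable
    _ = (∑ i ∈ Finset.range N, ‖w n i * (A i - a)‖)
        + ∑' i, ‖w n (i + N) * (A (i + N) - a)‖ :=
        (Summable.sum_add_tsum_nat_add N hnorm_summable).symm
    _ < ε := by
        have hterm1 : ∑ i ∈ Finset.range N, ‖w n i * (A i - a)‖
            ≤ (2 * C) * ∑ i ∈ Finset.range N, w n i := by
          rw [Finset.mul_sum]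
          apply Finset.sum_le_sum
          intro i _
          rw [norm_mul, Real.norm_eq_abs (w n i), abs_of_nonneg (hw_nonneg n i), mul_comm]
          apply mul_le_mul_of_nonneg_right _ (hw_nonneg n i)
          calc ‖A i - a‖ ≤ ‖A i‖ + ‖a‖ := norm_sub_le _ _
            _ ≤ 2 * C := by linarith [hAbound i, habound]
        have hterm2 : ∑' i, ‖w n (i + N) * (A (i + N) - a)‖ ≤ ε / 2 := by
          have hs1 : Summable fun i => ‖w n (i + N) * (A (i + N) - a)‖ :=
            (summable_nat_add_iff (f := fun k => ‖w n k * (A k - a)‖) N).2 hnorm_summable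
          have hs2 : Summable fun i => (ε / 2) * w n (i + N) :=
            ((summable_nat_add_iff (f := fun k => w n k) N).2 (hw_summable n)).mul_left _
          have hle : ∀ i, ‖w n (i + N) * (A (i + N) - a)‖ ≤ (ε / 2) * w n (i + N) := by
            intro i
            rw [norm_mul, Real.norm_eq_abs (w n (i + N)),
              abs_of_nonneg (hw_nonneg n _), mul_comm]
            apply mul_le_mul_of_nonneg_right _ (hw_nonneg n _)
            have := hN (i + N) (Nat.le_add_left N i)
            rw [Real.dist_eq] at this
            exact le_of_lt (by simpa [hA, ha] using this)
          have htail_le : ∑' i, ‖w n (i + N) * (A (i + N) - a)‖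
              ≤ ∑' i, (ε / 2) * w n (i + N) := Summable.tsum_le_tsum hle hs1 hs2
          have htail1 : ∑' i, w n (i + N) ≤ 1 := by
            have := Summable.sum_add_tsum_nat_add N (hw_summable n)
            have hpos : 0 ≤ ∑ i ∈ Finset.range N, w n i :=
              Finset.sum_nonneg fun i _ => hw_nonneg n i
            rw [hw_sum n] at this
            linarith
          calc ∑' i, ‖w n (i + N) * (A (i + N) - a)‖
              ≤ ∑' i, (ε / 2) * w n (i + N) := htail_le
            _ = (ε / 2) * ∑' i, w n (i + N) := tsum_mul_left
            _ ≤ ε / 2 := by nlinarith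
        have hsmall : ∑ i ∈ Finset.range N, w n i < ε / (2 * (2 * C + 1)) := by
          have := hM n hn
          rw [Real.dist_eq] at this
          rw [hw_init n N]
          calc (P {ω | ν n ω < N}).toReal
              = |(P {ω | ν n ω < N}).toReal - 0| := by
                rw [sub_zero, abs_of_nonneg ENNReal.toReal_nonneg]
            _ < ε / (2 * (2 * C + 1)) := this
        have hpos : 0 ≤ ∑ i ∈ Finset.range N, w n i :=
          Finset.sum_nonneg fun i _ => hw_nonneg n i
        have h2C : (2 * C) * ∑ i ∈ Finset.range N, w n i < ε / 2 := by
          rcases eq_or_lt_of_le hpos with h0 | h0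
          · rw [← h0, mul_zero]; positivity
          · calc (2 * C) * ∑ i ∈ Finset.range N, w n i
                < (2 * C + 1) * (ε / (2 * (2 * C + 1))) := by
                  apply mul_lt_mul' (by linarith) hsmall hpos (by linarith)
              _ = ε / 2 := by field_simp
        linarith
end

section
/- With the functions $x_n$ and $x$ of the preceding construction, for any strictly increasing continuous bijection $\mu : [0,1] \to [0,1]$ fixing endpoints and any $n$, one has $\max\big(\sup_{0 \le t \le 1}|x_{2n}(\mu(t)) - x(t)|,\ \sup_{0 \le t \le 1}|x_{2n+1}(\mu(t)) - x(t)|\big) \ge 1/2$. In particular, if $\nu_n$ equals $2n$ or $2n+1$ each with probability $1/2$, then $\frac{1}{2}\sup_t|x_{2n}(\mu(t))-x(t)| + \frac{1}{2}\sup_t|x_{2n+1}(\mu(t))-x(t)|$ does not tend to $0$ as $n \to \infty$ for any choice of $\mu = \mu_n$. -/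
open Filter Set

/-- The even-indexed functions `x_{2n}`, ramping from `0` to `1` on `[1/2 - 2^{-2n}, 1/2]`. -/
noncomputable def xEven (n : ℕ) : ℝ → ℝ := fun t =>
  if t ≤ 1 / 2 - 1 / 2 ^ (2 * n) then 0
  else if t ≤ 1 / 2 then 2 ^ (2 * n) * t + 1 - 2 ^ (2 * n) / 2
  else 1

/-- The odd-indexed functions `x_{2n+1}`, ramping from `0` to `1` on `[1/2, 1/2 + 2^{-(2n+1)}]`. -/
noncomputable def xOdd (n : ℕ) : ℝ → ℝ := fun t =>
  if t ≤ 1 / 2 then 0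
  else if t ≤ 1 / 2 + 1 / 2 ^ (2 * n + 1) then 2 ^ (2 * n + 1) * t - 2 ^ (2 * n)
  else 1

/-- The sequence `x_m`: `xEven n` for `m = 2n` and `xOdd n` for `m = 2n + 1`. -/
noncomputable def xSeq (m : ℕ) : ℝ → ℝ :=
  if m % 2 = 0 then xEven (m / 2) else xOdd (m / 2)

/-- The limit function `x = 1_{[1/2, 1]}`. -/
noncomputable def xLim : ℝ → ℝ := fun t => if t < 1 / 2 then 0 else 1

lemma xEven_mem (n : ℕ) (t : ℝ) : xEven n t ∈ Icc (0:ℝ) 1 := by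
  have hc : (0:ℝ) < 2 ^ (2 * n) := by positivity
  unfold xEven
  split_ifs with h1 h2
  · exact ⟨le_refl 0, zero_le_one⟩
  · push_neg at h1
    have hinv : (2:ℝ) ^ (2 * n) * (1 / 2 ^ (2 * n)) = 1 := by field_simp
    constructor
    · nlinarith [mul_lt_mul_of_pos_left h1 hc]
    · nlinarith
  · exact ⟨zero_le_one, le_refl 1⟩

lemma xOdd_mem (n : ℕ) (t : ℝ) : xOdd n t ∈ Icc (0:ℝ) 1 := by
  have hc : (0:ℝ) < 2 ^ (2 * n + 1) := by positivity
  unfold xOdd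
  split_ifs with h1 h2
  · exact ⟨le_refl 0, zero_le_one⟩
  · push_neg at h1
    have he : (2:ℝ) ^ (2 * n + 1) = 2 * 2 ^ (2 * n) := by ring
    have hinv : (2:ℝ) ^ (2 * n + 1) * (1 / 2 ^ (2 * n + 1)) = 1 := by field_simp
    constructor
    · nlinarith
    · nlinarith [mul_le_mul_of_nonneg_left h2 hc.le]
  · exact ⟨zero_le_one, le_refl 1⟩

lemma xLim_mem (t : ℝ) : xLim t ∈ Icc (0:ℝ) 1 := by
  unfold xLim; split_ifs
  · exact ⟨le_refl 0, zero_le_one⟩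
  · exact ⟨zero_le_one, le_refl 1⟩

lemma abs_diff_le {a b : ℝ} (ha : a ∈ Icc (0:ℝ) 1) (hb : b ∈ Icc (0:ℝ) 1) :
    |a - b| ≤ 1 := by
  rw [abs_le]; constructor <;> [linarith [ha.1, hb.2]; linarith [ha.2, hb.1]]

lemma bddE (n : ℕ) (μ : ℝ → ℝ) :
    BddAbove (range fun t : Icc (0:ℝ) 1 => |xEven n (μ t) - xLim t|) := by
  refine ⟨1, ?_⟩
  rintro y ⟨t, rfl⟩
  exact abs_diff_le (xEven_mem n (μ t)) (xLim_mem t)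

lemma bddO (n : ℕ) (μ : ℝ → ℝ) :
    BddAbove (range fun t : Icc (0:ℝ) 1 => |xOdd n (μ t) - xLim t|) := by
  refine ⟨1, ?_⟩
  rintro y ⟨t, rfl⟩
  exact abs_diff_le (xOdd_mem n (μ t)) (xLim_mem t)

lemma key (μ : ℝ → ℝ) (hμ : TimeChange μ) (n : ℕ) :
    (1:ℝ) / 2 ≤ max (⨆ t : Icc (0:ℝ) 1, |xEven n (μ t) - xLim t|)
      (⨆ t : Icc (0:ℝ) 1, |xOdd n (μ t) - xLim t|) := by
  obtain ⟨hmono, -, -, -, hmaps, hsurj⟩ := hμ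
  have hhalf : (1:ℝ)/2 ∈ Icc (0:ℝ) 1 := by norm_num
  have hLhalf : xLim (1/2) = 1 := by unfold xLim; norm_num
  by_cases hs : μ (1/2) ≤ 1/2
  · -- odd function is 0 at μ(1/2), xLim(1/2) = 1
    refine le_trans ?_ (le_max_right _ _)
    have hval : |xOdd n (μ ((⟨1/2, hhalf⟩ : Icc (0:ℝ) 1) : ℝ)) - xLim ((⟨1/2, hhalf⟩ : Icc (0:ℝ) 1) : ℝ)| = 1 := by
      simp only
      rw [hLhalf]
      have : xOdd n (μ (1/2)) = 0 := by unfold xOdd; rw [if_pos hs]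
      rw [this]; norm_num
    calc (1:ℝ)/2 ≤ 1 := by norm_num
      _ = _ := hval.symm
      _ ≤ _ := le_ciSup (bddO n μ) ⟨1/2, hhalf⟩
  · push_neg at hs
    -- pick u strictly between 1/2 and μ(1/2); surjectivity gives t with μ t = u
    set s := μ (1/2) with hsdef
    have hs1 : s ≤ 1 := (hmaps hhalf).2
    set u := (1/2 + s)/2 with hu
    have hu1 : 1/2 < u := by rw [hu]; linarith
    have hu2 : u < s := by rw [hu]; linarith
    have humem : u ∈ Icc (0:ℝ) 1 := ⟨by linarith, by linarith⟩
    obtain ⟨t, ht, htu⟩ := hsurj humem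
    have htlt : t < 1/2 := by
      have := (hmono.lt_iff_lt ht hhalf).mp (by rw [htu]; exact hu2)
      exact this
    refine le_trans ?_ (le_max_left _ _)
    have hval : |xEven n (μ ((⟨t, ht⟩ : Icc (0:ℝ) 1) : ℝ)) - xLim ((⟨t, ht⟩ : Icc (0:ℝ) 1) : ℝ)| = 1 := by
      simp only
      have hL : xLim t = 0 := by unfold xLim; rw [if_pos htlt]
      have hE : xEven n (μ t) = 1 := by
        have hc : (0:ℝ) < 1 / 2 ^ (2 * n) := by positivity
        unfold xEven
        rw [if_neg (by rw [htu]; linarith), if_neg (by rw [htu]; linarith)]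
      rw [hL, hE]; norm_num
    calc (1:ℝ)/2 ≤ 1 := by norm_num
      _ = _ := hval.symm
      _ ≤ _ := le_ciSup (bddE n μ) ⟨t, ht⟩

theorem no_common_time_change_for_discontinuous_limit :
    (∀ μ : ℝ → ℝ, TimeChange μ → ∀ n : ℕ,
      (1:ℝ) / 2 ≤ max (⨆ t : Icc (0:ℝ) 1, |xEven n (μ t) - xLim t|)
        (⨆ t : Icc (0:ℝ) 1, |xOdd n (μ t) - xLim t|)) ∧
      ∀ μ : ℕ → ℝ → ℝ, (∀ n, TimeChange (μ n)) →
        ¬ Tendsto (fun n =>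
            (1:ℝ) / 2 * (⨆ t : Icc (0:ℝ) 1, |xEven n (μ n t) - xLim t|) +
            (1:ℝ) / 2 * (⨆ t : Icc (0:ℝ) 1, |xOdd n (μ n t) - xLim t|))
          atTop (nhds 0) := by
  constructor
  · exact fun μ hμ n => key μ hμ n
  · intro μ hμ hT
    have hzero : ((0:ℝ)) ∈ Icc (0:ℝ) 1 := by norm_num
    have hlb : ∀ n, (1:ℝ)/4 ≤
        (1:ℝ) / 2 * (⨆ t : Icc (0:ℝ) 1, |xEven n (μ n t) - xLim t|) +
        (1:ℝ) / 2 * (⨆ t : Icc (0:ℝ) 1, |xOdd n (μ n t) - xLim t|) := by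
      intro n
      have hE0 : (0:ℝ) ≤ ⨆ t : Icc (0:ℝ) 1, |xEven n (μ n t) - xLim t| :=
        le_trans (abs_nonneg _) (le_ciSup (bddE n (μ n)) ⟨0, hzero⟩)
      have hO0 : (0:ℝ) ≤ ⨆ t : Icc (0:ℝ) 1, |xOdd n (μ n t) - xLim t| :=
        le_trans (abs_nonneg _) (le_ciSup (bddO n (μ n)) ⟨0, hzero⟩)
      have hk := key (μ n) (hμ n) n
      rcases max_cases (⨆ t : Icc (0:ℝ) 1, |xEven n (μ n t) - xLim t|)
        (⨆ t : Icc (0:ℝ) 1, |xOdd n (μ n t) - xLim t|) with ⟨heq, -⟩ | ⟨heq, -⟩ <;>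
        rw [heq] at hk <;> linarith
    have := ge_of_tendsto' hT hlb
    linarith
end
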